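/- Let 0 < t < 1, p₂ > 0 and α₂ < β₂ be real numbers with β₂ − α₂ = 4·√(p₂·t·(1−t)). Set Δ₂ = α₂² − α₂·β₂ + β₂², α = (−α₂ − β₂ + 2·√Δ₂)/3 and δ₂ = (α₂ + β₂ + √Δ₂)/3. Then α > 0 and ∫₋α^0 (δ₂ − x)/(2π·t·(1−t)) · √((x + α)/(−x)) dx = p₂; that is, the signed measure μ₂ on [−α, 0] with density dμ₂/dx = ((δ₂ − x)/(2π·t·(1−t)))·√((x + α)/(−x)) has total mass p₂. -/

import Mathlib

open MeasureTheory Set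

noncomputable def Faux (a d x : ℝ) : ℝ :=
  (2*x+a)/4 * Real.sqrt (-(x*(x+a))) + a^2/8 * Real.arcsin ((2*x+a)/a)
    + d * (- Real.sqrt (-(x*(x+a))) + a/2 * Real.arcsin ((2*x+a)/a))

lemma Faux_deriv (a d : ℝ) (ha : 0 < a) (x : ℝ) (hx : x ∈ Ioo (-a) (0:ℝ)) :
    HasDerivAt (Faux a d) ((d - x) * Real.sqrt ((x + a)/(-x))) x := by
  obtain ⟨hx1, hx2⟩ := hx
  have hxa : 0 < x + a := by linarith
  have hP : 0 < -(x*(x+a)) := by nlinarith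
  have hPd : HasDerivAt (fun y : ℝ => -(y*(y+a))) (-(1*(x+a)+x*1)) x :=
    ((hasDerivAt_id x).mul ((hasDerivAt_id x).add_const a)).neg
  have hsq : HasDerivAt (fun y : ℝ => Real.sqrt (-(y*(y+a))))
      ((-(1*(x+a)+x*1))/(2*Real.sqrt (-(x*(x+a))))) x := hPd.sqrt (ne_of_gt hP)
  have hinner : HasDerivAt (fun y : ℝ => (2*y+a)/a) (2*1/a) x :=
    (((hasDerivAt_id x).const_mul 2).add_const a).div_const a
  have h₁ : (2*x+a)/a ≠ -1 := by
    intro h; rw [div_eq_iff (ne_of_gt ha)] at h; nlinarith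
  have h₂ : (2*x+a)/a ≠ 1 := by
    intro h; rw [div_eq_iff (ne_of_gt ha)] at h; nlinarith
  have harc : HasDerivAt (fun y : ℝ => Real.arcsin ((2*y+a)/a))
      ((1/Real.sqrt (1-((2*x+a)/a)^2)) * (2*1/a)) x :=
    by have := (Real.hasDerivAt_arcsin h₁ h₂).comp x hinner; exact this
  have hF : HasDerivAt (Faux a d)
      ((2/4 * Real.sqrt (-(x*(x+a))) + (2*x+a)/4 * ((-(1*(x+a)+x*1))/(2*Real.sqrt (-(x*(x+a))))))
        + a^2/8 * ((1/Real.sqrt (1-((2*x+a)/a)^2)) * (2*1/a))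
        + d * (- ((-(1*(x+a)+x*1))/(2*Real.sqrt (-(x*(x+a)))))
            + a/2 * ((1/Real.sqrt (1-((2*x+a)/a)^2)) * (2*1/a)))) x := by
    unfold Faux
    exact ((((((hasDerivAt_id x).const_mul 2).add_const a).div_const 4).mul hsq).add
        (harc.const_mul (a^2/8))).add
      ((hsq.neg.add (harc.const_mul (a/2))).const_mul d) |>.congr_deriv
        (by simp only [id_eq]; ring)
  convert hF using 1
  have hu2 : Real.sqrt (-x) ^ 2 = -x := Real.sq_sqrt (by linarith)
  have hv2 : Real.sqrt (x+a) ^ 2 = x + a := Real.sq_sqrt (le_of_lt hxa)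
  have hu0 : 0 < Real.sqrt (-x) := Real.sqrt_pos.2 (by linarith)
  have hv0 : 0 < Real.sqrt (x+a) := Real.sqrt_pos.2 hxa
  have hs : Real.sqrt (-(x*(x+a))) = Real.sqrt (-x) * Real.sqrt (x+a) := by
    rw [show -(x*(x+a)) = (-x)*(x+a) by ring, Real.sqrt_mul (by linarith)]
  have hratio : Real.sqrt ((x+a)/(-x)) = Real.sqrt (x+a) / Real.sqrt (-x) :=
    Real.sqrt_div (le_of_lt hxa) _
  have harcsqrt : Real.sqrt (1-((2*x+a)/a)^2)
      = 2*(Real.sqrt (-x) * Real.sqrt (x+a))/a := by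
    have h : 1-((2*x+a)/a)^2 = (2*(Real.sqrt (-x) * Real.sqrt (x+a))/a)^2 := by
      field_simp
      nlinarith [hu2, hv2]
    rw [h, Real.sqrt_sq (by positivity)]
  rw [hratio, hs, harcsqrt]
  generalize Real.sqrt (-x) = u at hu2 hu0 ⊢
  generalize Real.sqrt (x+a) = v at hv2 hv0 ⊢
  have hxu : x = -u^2 := by linarith
  subst hxu
  have hav : a = u^2 + v^2 := by linarith
  subst hav
  field_simp
  ring

lemma integrable_aux (a d : ℝ) (ha : 0 < a) :
    IntervalIntegrable (fun x => (d - x) * Real.sqrt ((x + a)/(-x))) volume (-a) 0 := by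
  have h0 : IntervalIntegrable (fun x : ℝ => x ^ (-(1/2) : ℝ)) volume 0 a :=
    intervalIntegral.intervalIntegrable_rpow' (by norm_num)
  have h1 : IntervalIntegrable (fun x : ℝ => (-x) ^ (-(1/2) : ℝ)) volume (-a) 0 := by
    have := (IntervalIntegrable.iff_comp_neg (f := fun x : ℝ => x ^ (-(1/2) : ℝ)) enorm_ne_top).mp h0
    simpa using this.symm
  have hb : IntervalIntegrable
      (fun x : ℝ => ((|d|+a) * Real.sqrt a) * (-x) ^ (-(1/2) : ℝ)) volume (-a) 0 :=
    h1.const_mul _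
  refine hb.mono_fun ?_ ?_
  · apply Measurable.aestronglyMeasurable
    exact (measurable_const.sub measurable_id).mul
      (Real.continuous_sqrt.measurable.comp ((measurable_id.add_const a).div measurable_neg))
  · rw [uIoc_of_le (by linarith : (-a:ℝ) ≤ 0)]
    filter_upwards [ae_restrict_mem measurableSet_Ioc] with x hx
    obtain ⟨hx1, hx2⟩ := hx
    rcases eq_or_lt_of_le hx2 with h0 | h0
    · subst h0
      simp [Real.norm_eq_abs, abs_nonneg, div_zero, Real.sqrt_zero]
    · have hxa : 0 < x + a := by linarith
      have hnx : 0 < -x := by linarith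
      rw [Real.norm_eq_abs, Real.norm_eq_abs, abs_mul,
        abs_of_nonneg (Real.sqrt_nonneg _)]
      have hb1 : Real.sqrt ((x+a)/(-x)) ≤ Real.sqrt a * (-x) ^ (-(1/2) : ℝ) := by
        have e1 : Real.sqrt ((x+a)/(-x)) ≤ Real.sqrt (a/(-x)) := by
          apply Real.sqrt_le_sqrt
          gcongr
          linarith
        have e2 : Real.sqrt (a/(-x)) = Real.sqrt a * (-x) ^ (-(1/2) : ℝ) := by
          rw [Real.sqrt_div (le_of_lt ha), Real.sqrt_eq_rpow (-x),
            Real.rpow_neg hnx.le, div_eq_mul_inv]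
        rw [← e2]; exact e1
      have hb2 : |d - x| ≤ |d| + a := by
        have h3 : |d - x| ≤ |d| + |x| := abs_sub d x
        have h4 : |x| ≤ a := by rw [abs_le]; constructor <;> linarith
        linarith
      calc |d - x| * Real.sqrt ((x+a)/(-x))
          ≤ (|d|+a) * (Real.sqrt a * (-x) ^ (-(1/2) : ℝ)) := by
            apply mul_le_mul hb2 hb1 (Real.sqrt_nonneg _) (by positivity)
        _ = |(|d|+a) * Real.sqrt a * (-x) ^ (-(1/2) : ℝ)| := by
            rw [mul_assoc ((|d|+a)) (Real.sqrt a), abs_of_nonneg (mul_nonneg (by positivity)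
              (mul_nonneg (Real.sqrt_nonneg _) (Real.rpow_nonneg hnx.le _)))]


lemma integral_aux (a d : ℝ) (ha : 0 < a) :
    ∫ x in (-a)..(0:ℝ), (d - x) * Real.sqrt ((x + a)/(-x))
      = Real.pi*a^2/8 + Real.pi*d*a/2 := by
  have hcont : ContinuousOn (Faux a d) (Icc (-a) 0) := by
    apply Continuous.continuousOn
    have c1 : Continuous fun x : ℝ => Real.sqrt (-(x*(x+a))) :=
      Real.continuous_sqrt.comp (by fun_prop)
    have c2 : Continuous fun x : ℝ => Real.arcsin ((2*x+a)/a) :=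
      Real.continuous_arcsin.comp (by fun_prop)
    unfold Faux
    exact (((by fun_prop : Continuous fun x : ℝ => (2*x+a)/4).mul c1).add
      (continuous_const.mul c2)).add
      (continuous_const.mul ((c1.neg).add (continuous_const.mul c2)))
  have key := intervalIntegral.integral_eq_sub_of_hasDeriv_right_of_le (by linarith : (-a:ℝ) ≤ 0)
    hcont (fun x hx => (Faux_deriv a d ha x hx).hasDerivWithinAt) (integrable_aux a d ha)
  rw [key]
  have ha' : a ≠ 0 := ne_of_gt ha
  have e1 : (2*(0:ℝ)+a)/a = 1 := by field_simp; ring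
  have e2 : (2*(-a)+a)/a = -1 := by field_simp; ring
  unfold Faux
  rw [e1, e2, Real.arcsin_one, Real.arcsin_neg_one]
  norm_num
  ring




/-- The signed measure `μ₂` on `[−α, 0]` with density
`((δ₂ − x)/(2π t(1−t)))·√((x + α)/(−x))` has total mass `p₂`, and `α > 0`. -/
theorem mu2_total_mass (t p₂ α₂ β₂ : ℝ) (ht0 : 0 < t) (ht1 : t < 1)
    (hp₂ : 0 < p₂) (hαβ : α₂ < β₂)
    (hsep : β₂ - α₂ = 4 * Real.sqrt (p₂ * t * (1 - t)))
    (Δ₂ α δ₂ : ℝ)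
    (hΔ₂ : Δ₂ = α₂ ^ 2 - α₂ * β₂ + β₂ ^ 2)
    (hα : α = (-α₂ - β₂ + 2 * Real.sqrt Δ₂) / 3)
    (hδ₂ : δ₂ = (α₂ + β₂ + Real.sqrt Δ₂) / 3) :
    0 < α ∧
      ∫ x in (-α)..(0:ℝ),
        (δ₂ - x) / (2 * Real.pi * t * (1 - t)) * Real.sqrt ((x + α) / (-x)) = p₂ := by
  have hΔnn : 0 ≤ Δ₂ := by nlinarith
  have hD2 : Real.sqrt Δ₂ ^ 2 = Δ₂ := Real.sq_sqrt hΔnn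
  have hD0 : 0 ≤ Real.sqrt Δ₂ := Real.sqrt_nonneg _
  have hαpos : 0 < α := by
    rw [hα]
    nlinarith [hD2, hD0, sq_nonneg (α₂ - β₂), sq_nonneg (2*Real.sqrt Δ₂ + (α₂+β₂))]
  refine ⟨hαpos, ?_⟩
  have hkey : α^2 + 4*δ₂*α = 16 * (p₂ * t * (1 - t)) := by
    have hsq : (β₂ - α₂)^2 = 16 * (p₂ * t * (1-t)) := by
      rw [hsep]
      rw [mul_pow, Real.sq_sqrt (mul_pos (mul_pos hp₂ ht0) (by linarith : (0:ℝ) < 1 - t)).le]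
      ring
    rw [hα, hδ₂, ← hsq]
    linear_combination (4/3 : ℝ) * hD2 + (4/3 : ℝ) * hΔ₂
  have hre : ∀ x : ℝ, (δ₂ - x) / (2 * Real.pi * t * (1 - t)) * Real.sqrt ((x + α) / (-x))
      = (2 * Real.pi * t * (1 - t))⁻¹ * ((δ₂ - x) * Real.sqrt ((x + α) / (-x))) := by
    intro x; ring
  simp_rw [hre]
  rw [intervalIntegral.integral_const_mul, integral_aux α δ₂ hαpos]
  have hπ : Real.pi ≠ 0 := Real.pi_ne_zero
  have ht : t ≠ 0 := ne_of_gt ht0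
  have ht' : (1:ℝ) - t ≠ 0 := by intro h; linarith
  field_simp
  linear_combination 2 * hkey
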